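/- Let z_k → η weakly-* in L^∞ with sup_k ‖z_k‖_∞ < ∞ (vector fields in ℝⁿ with divergence a Radon measure), let S_k, Σ be closed oriented H^{n−1}-rectifiable sets with locally finite H^{n−1}-measure such that H^{n−1}⌊S_k ⇀ H^{n−1}⌊Σ weakly as measures and |div z_k|⌊(ℝⁿ ∖ S_k) ⇀ 0. Then div η = 0 on ℝⁿ ∖ Σ in the distributional sense. -/

import Mathlib

open MeasureTheory Real RealInnerProductSpace Filter Topology

/-- A set `S ⊆ ℝⁿ` is countably `H^d`-rectifiable if, up to an `H^d`-null set,
it is covered by countably many Lipschitz images of `ℝ^d`. -/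
def HausdorffRectifiable (n d : ℕ) (S : Set (EuclideanSpace ℝ (Fin n))) : Prop :=
  ∃ g : ℕ → EuclideanSpace ℝ (Fin d) → EuclideanSpace ℝ (Fin n),
    (∀ i, ∃ K : NNReal, LipschitzWith K (g i)) ∧
    μH[(d : ℝ)] (S \ ⋃ i, Set.range (g i)) = 0

/-- if `z_k ⇀ η` weakly-* in `L^∞`, `H^{n-1}⌊S_k ⇀ H^{n-1}⌊Σ`,
and `|div z_k|⌊(ℝⁿ∖S_k) ⇀ 0`, then `div η = 0` on `ℝⁿ ∖ Σ`.
Here `ν k` plays the role of the total variation `|div z_k|`, controlled on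
`S_k` by the jump (weak normal trace) formula. -/
theorem divergence_vanishes_off_limit_set
    (n : ℕ) (hn : 2 ≤ n) (M : ℝ)
    (z : ℕ → EuclideanSpace ℝ (Fin n) → EuclideanSpace ℝ (Fin n))
    (η : EuclideanSpace ℝ (Fin n) → EuclideanSpace ℝ (Fin n))
    (hzmeas : ∀ k, AEStronglyMeasurable (z k) volume)
    (hηmeas : AEStronglyMeasurable η volume)
    (hbd : ∀ k, ∀ᵐ x ∂volume, ‖z k x‖ ≤ M)
    (S : ℕ → Set (EuclideanSpace ℝ (Fin n))) (Sigma : Set (EuclideanSpace ℝ (Fin n)))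
    (hSclosed : ∀ k, IsClosed (S k)) (hSigClosed : IsClosed Sigma)
    (hSrect : ∀ k, HausdorffRectifiable n (n - 1) (S k))
    (hSigRect : HausdorffRectifiable n (n - 1) Sigma)
    (hSlocfin : ∀ k x, ∃ r > (0 : ℝ), μH[(n : ℝ) - 1] (S k ∩ Metric.ball x r) < ⊤)
    (hSiglocfin : ∀ x, ∃ r > (0 : ℝ), μH[(n : ℝ) - 1] (Sigma ∩ Metric.ball x r) < ⊤)
    -- (i) z_k → η in L^∞-w*
    (hwstar : ∀ f : EuclideanSpace ℝ (Fin n) → EuclideanSpace ℝ (Fin n),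
      Integrable f volume →
      Tendsto (fun k => ∫ x, ⟪f x, z k x⟫) atTop (𝓝 (∫ x, ⟪f x, η x⟫)))
    -- ν k = |div z_k| as a finite measure
    (ν : ℕ → Measure (EuclideanSpace ℝ (Fin n)))
    (hνfin : ∀ k, IsFiniteMeasure (ν k))
    (hdivmeas : ∀ k, ∀ φ : EuclideanSpace ℝ (Fin n) → ℝ,
      ContDiff ℝ 1 φ → HasCompactSupport φ →
      |∫ x, ⟪z k x, gradient φ x⟫| ≤ ∫ x, |φ x| ∂(ν k))
    -- jump (trace) bound: |div z_k| ⌊ S_k ≤ 2‖z_k‖_∞ H^{n-1} ⌊ S_k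
    (htrace : ∀ k, (ν k).restrict (S k)
      ≤ ENNReal.ofReal (2 * M) • (μH[(n : ℝ) - 1]).restrict (S k))
    -- (ii) H^{n-1}⌊S_k ⇀ H^{n-1}⌊Σ
    (hmeasconv : ∀ φ : EuclideanSpace ℝ (Fin n) → ℝ,
      Continuous φ → HasCompactSupport φ →
      Tendsto (fun k => ∫ x, φ x ∂((μH[(n : ℝ) - 1]).restrict (S k))) atTop
        (𝓝 (∫ x, φ x ∂((μH[(n : ℝ) - 1]).restrict Sigma))))
    -- (iii) |div z_k|⌊(ℝⁿ ∖ S_k) ⇀ 0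
    (hdivconv : ∀ φ : EuclideanSpace ℝ (Fin n) → ℝ,
      Continuous φ → HasCompactSupport φ →
      Tendsto (fun k => ∫ x, φ x ∂((ν k).restrict (S k)ᶜ)) atTop (𝓝 0)) :
    ∀ φ : EuclideanSpace ℝ (Fin n) → ℝ,
      ContDiff ℝ 1 φ → HasCompactSupport φ → tsupport φ ⊆ Sigmaᶜ →
      ∫ x, ⟪η x, gradient φ x⟫ = 0 := by
  
  intro φ hφ hφc hφsupp
  have hEmeas : MeasurableSet (Sigma) := hSigClosed.measurableSet
  -- gradient is continuous with compact support
  have hgrad_eq : gradient φ = fun x =>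
      (InnerProductSpace.toDual ℝ (EuclideanSpace ℝ (Fin n))).symm (fderiv ℝ φ x) := rfl
  have hgradcont : Continuous (gradient φ) := by
    rw [hgrad_eq]
    exact (InnerProductSpace.toDual ℝ (EuclideanSpace ℝ (Fin n))).symm.continuous.comp
      (hφ.continuous_fderiv one_ne_zero)
  have hgradsupp : HasCompactSupport (gradient φ) := by
    rw [hgrad_eq]
    exact (hφc.fderiv ℝ).comp_left (map_zero _)
  have hgradint : Integrable (gradient φ) volume :=
    hgradcont.integrable_of_hasCompactSupport hgradsupp
  -- |φ| is continuous with compact support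
  have hφcont : Continuous φ := hφ.continuous
  have habs_cont : Continuous fun x => |φ x| := hφcont.abs
  have habs_supp : HasCompactSupport fun x => |φ x| := hφc.abs
  -- φ vanishes on Σ
  have hphiSig : ∀ x ∈ Sigma, φ x = 0 := by
    intro x hx
    by_contra h
    exact hφsupp (subset_tsupport φ h) hx
  -- weak-* convergence applied to gradient φ
  have h1 : Tendsto (fun k => ∫ x, ⟪gradient φ x, z k x⟫) atTop
      (𝓝 (∫ x, ⟪gradient φ x, η x⟫)) := hwstar _ hgradint
  set c : ℝ := max (2 * M) 0 with hc
  have hc0 : 0 ≤ c := le_max_right _ _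
  -- the Hausdorff-part term tends to 0
  have hWlim : Tendsto (fun k => ∫ x, |φ x| ∂((μH[(n : ℝ) - 1]).restrict (S k))) atTop (𝓝 0) := by
    have := hmeasconv _ habs_cont habs_supp
    have hzero : ∫ x, |φ x| ∂((μH[(n : ℝ) - 1]).restrict Sigma) = 0 := by
      rw [setIntegral_eq_zero_of_forall_eq_zero]
      intro x hx
      rw [hphiSig x hx, abs_zero]
    rwa [hzero] at this
  -- main squeeze
  have h2 : Tendsto (fun k => ∫ x, ⟪gradient φ x, z k x⟫) atTop (𝓝 0) := by
    have hlim : Tendsto (fun k =>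
        c * (∫ x, |φ x| ∂((μH[(n : ℝ) - 1]).restrict (S k)))
          + ∫ x, |φ x| ∂((ν k).restrict (S k)ᶜ)) atTop (𝓝 0) := by
      have hB := hdivconv _ habs_cont habs_supp
      have hA := hWlim.const_mul c
      have := hA.add hB
      simpa using this
    refine squeeze_zero_norm ?_ hlim
    intro k
    haveI := hνfin k
    have hSmeas : MeasurableSet (S k) := (hSclosed k).measurableSet
    -- locally finite Hausdorff restriction ⇒ finite on compacts
    haveI hloc : IsLocallyFiniteMeasure
        ((ENNReal.ofReal c) • (μH[(n : ℝ) - 1]).restrict (S k)) := by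
      constructor
      intro x
      obtain ⟨r, hr, hfin⟩ := hSlocfin k x
      refine ⟨Metric.ball x r, Metric.ball_mem_nhds x hr, ?_⟩
      rw [Measure.smul_apply, Measure.restrict_apply measurableSet_ball,
        Set.inter_comm]
      exact ENNReal.mul_lt_top ENNReal.ofReal_lt_top hfin
    have habs_int : Integrable (fun x => |φ x|)
        ((ENNReal.ofReal c) • (μH[(n : ℝ) - 1]).restrict (S k)) :=
      habs_cont.integrable_of_hasCompactSupport habs_supp
    have habs_int' : Integrable (fun x => |φ x|) (ν k) :=
      habs_cont.integrable_of_hasCompactSupport habs_supp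
    have hle : (ν k).restrict (S k)
        ≤ (ENNReal.ofReal c) • (μH[(n : ℝ) - 1]).restrict (S k) := by
      refine le_trans (htrace k) ?_
      intro s
      simp only [Measure.smul_apply, smul_eq_mul]
      gcongr
      exact le_max_left _ _
    have hA : ∫ x, |φ x| ∂((ν k).restrict (S k))
        ≤ c * ∫ x, |φ x| ∂((μH[(n : ℝ) - 1]).restrict (S k)) := by
      calc ∫ x, |φ x| ∂((ν k).restrict (S k))
          ≤ ∫ x, |φ x| ∂((ENNReal.ofReal c) • (μH[(n : ℝ) - 1]).restrict (S k)) :=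
            integral_mono_measure hle (Filter.Eventually.of_forall fun x => abs_nonneg _)
              habs_int
        _ = c * ∫ x, |φ x| ∂((μH[(n : ℝ) - 1]).restrict (S k)) := by
            rw [integral_smul_measure, ENNReal.toReal_ofReal hc0, smul_eq_mul]
    have hsplit : ∫ x, |φ x| ∂(ν k)
        = ∫ x, |φ x| ∂((ν k).restrict (S k)) + ∫ x, |φ x| ∂((ν k).restrict (S k)ᶜ) := by
      rw [← integral_add_measure (habs_int'.restrict) (habs_int'.restrict),
        Measure.restrict_add_restrict_compl hSmeas]
    have hzbd : |∫ x, ⟪z k x, gradient φ x⟫| ≤ ∫ x, |φ x| ∂(ν k) := hdivmeas k φ hφ hφc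
    have hswap : (∫ x, ⟪gradient φ x, z k x⟫) = ∫ x, ⟪z k x, gradient φ x⟫ := by
      congr 1; funext x; exact real_inner_comm _ _
    rw [Real.norm_eq_abs, hswap]
    calc |∫ x, ⟪z k x, gradient φ x⟫| ≤ ∫ x, |φ x| ∂(ν k) := hzbd
      _ = ∫ x, |φ x| ∂((ν k).restrict (S k)) + ∫ x, |φ x| ∂((ν k).restrict (S k)ᶜ) := hsplit
      _ ≤ c * (∫ x, |φ x| ∂((μH[(n : ℝ) - 1]).restrict (S k)))
          + ∫ x, |φ x| ∂((ν k).restrict (S k)ᶜ) := by gcongr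
  have hfin : (∫ x, ⟪gradient φ x, η x⟫) = 0 := tendsto_nhds_unique h1 h2
  rw [← hfin]
  congr 1; funext x; exact real_inner_comm _ _
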